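/- Let Λ ⊆ R^n be a unimodular lattice whose Dirichlet fundamental domain centered at 0 is not contained in the sup-norm ball of radius R. Then the dual lattice Λ* = {s ∈ R^n : ⟨r, s⟩ ∈ Z for all r ∈ Λ} contains a nonzero vector s with |s|_∞ ≤ C/R, where C is a constant depending only on n. -/

import Mathlib

open scoped Classical

namespace Stmt19Aux

open Matrix

noncomputable section

/-- dot product on `Fin n → ℝ`. -/
def dotv {n : ℕ} (x y : Fin n → ℝ) : ℝ := ∑ i, x i * y i

/-- squared ℓ² norm. -/
def qv {n : ℕ} (x : Fin n → ℝ) : ℝ := ∑ i, x i ^ 2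

/-- integer combination of a family of vectors. -/
def icomb {n k : ℕ} (v : Fin k → Fin n → ℝ) (m : Fin k → ℤ) : Fin n → ℝ :=
  ∑ i, (m i : ℝ) • v i

/-- Gram matrix. -/
def gram {n k : ℕ} (v : Fin k → Fin n → ℝ) : Matrix (Fin k) (Fin k) ℝ :=
  Matrix.of fun i j => dotv (v i) (v j)

variable {n k : ℕ}

lemma qv_nonneg (x : Fin n → ℝ) : 0 ≤ qv x :=
  Finset.sum_nonneg fun i _ => sq_nonneg _

lemma qv_eq_zero {x : Fin n → ℝ} (h : qv x = 0) : x = 0 := by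
  funext i
  have := (Finset.sum_eq_zero_iff_of_nonneg (fun i _ => sq_nonneg (x i))).1 h i (Finset.mem_univ i)
  simpa using pow_eq_zero_iff (n := 2) (by norm_num) |>.1 this

lemma qv_pos {x : Fin n → ℝ} (h : x ≠ 0) : 0 < qv x :=
  lt_of_le_of_ne (qv_nonneg x) fun h0 => h (qv_eq_zero h0.symm)

lemma dotv_comm (x y : Fin n → ℝ) : dotv x y = dotv y x := by
  simp [dotv, mul_comm]

lemma dotv_sum_left {K : ℕ} (f : Fin K → Fin n → ℝ) (y : Fin n → ℝ) :
    dotv (∑ i, f i) y = ∑ i, dotv (f i) y := by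
  simp only [dotv, Finset.sum_apply, Finset.sum_mul]
  exact Finset.sum_comm

lemma dotv_smul_left (c : ℝ) (x y : Fin n → ℝ) : dotv (c • x) y = c * dotv x y := by
  simp [dotv, Finset.mul_sum, mul_assoc]

lemma dotv_sub_left (x x' y : Fin n → ℝ) : dotv (x - x') y = dotv x y - dotv x' y := by
  simp [dotv, sub_mul, Finset.sum_sub_distrib]

lemma dotv_add_left (x x' y : Fin n → ℝ) : dotv (x + x') y = dotv x y + dotv x' y := by
  simp [dotv, add_mul, Finset.sum_add_distrib]

lemma dotv_self (x : Fin n → ℝ) : dotv x x = qv x := by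
  simp [dotv, qv, sq]

lemma pythagoras {x y : Fin n → ℝ} (c : ℝ) (h : dotv x y = 0) :
    qv (x + c • y) = qv x + c ^ 2 * qv y := by
  have expand : ∀ j, (x j + c * y j) ^ 2 = x j ^ 2 + (2 * c) * (x j * y j) + c ^ 2 * y j ^ 2 := by
    intro j; ring
  have : qv (x + c • y) = qv x + (2 * c) * dotv x y + c ^ 2 * qv y := by
    simp only [qv, dotv, Pi.add_apply, Pi.smul_apply, smul_eq_mul]
    rw [Finset.sum_congr rfl fun j _ => expand j]
    rw [Finset.sum_add_distrib, Finset.sum_add_distrib, ← Finset.mul_sum, ← Finset.mul_sum]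
  rw [this, h]; ring

lemma abs_le_sqrt_qv (x : Fin n → ℝ) (i : Fin n) : |x i| ≤ Real.sqrt (qv x) := by
  have h1 : x i ^ 2 ≤ qv x :=
    Finset.single_le_sum (f := fun j => x j ^ 2) (fun j _ => sq_nonneg _) (Finset.mem_univ i)
  calc |x i| = Real.sqrt (x i ^ 2) := (Real.sqrt_sq_eq_abs _).symm
  _ ≤ Real.sqrt (qv x) := Real.sqrt_le_sqrt h1

lemma norm_le_sqrt_qv (x : Fin n → ℝ) : ‖x‖ ≤ Real.sqrt (qv x) := by
  rw [pi_norm_le_iff_of_nonneg (Real.sqrt_nonneg _)]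
  intro i; rw [Real.norm_eq_abs]; exact abs_le_sqrt_qv x i

lemma icomb_sum {K : ℕ} (v : Fin k → Fin n → ℝ) (z : Fin K → ℤ) (mm : Fin K → Fin k → ℤ) :
    ∑ j, (z j : ℝ) • icomb v (mm j) = icomb v (∑ j, z j • mm j) := by
  unfold icomb
  have h1 : ∀ j : Fin K, (z j : ℝ) • ∑ i, (mm j i : ℝ) • v i
      = ∑ i, ((z j * mm j i : ℤ) : ℝ) • v i := by
    intro j; rw [Finset.smul_sum]
    refine Finset.sum_congr rfl fun i _ => ?_
    rw [smul_smul]; norm_cast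
  rw [Finset.sum_congr rfl fun j _ => h1 j, Finset.sum_comm]
  refine Finset.sum_congr rfl fun i _ => ?_
  rw [← Finset.sum_smul]
  congr 1
  push_cast [Finset.sum_apply]
  refine Finset.sum_congr rfl fun j _ => ?_
  simp [Pi.smul_apply, smul_eq_mul]

lemma comb_eq_mulVec (v : Fin k → Fin n → ℝ) (c : Fin k → ℝ) :
    (Matrix.of fun i j => v j i).mulVec c = ∑ i, c i • v i := by
  funext a
  simp [Matrix.mulVec, dotProduct, Finset.sum_apply, mul_comm]

lemma exists_antilip (v : Fin k → Fin n → ℝ) (hv : LinearIndependent ℝ v) :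
    ∃ K : ℝ, 0 ≤ K ∧ ∀ c : Fin k → ℝ, ‖c‖ ≤ K * ‖∑ i, c i • v i‖ := by
  set A : Matrix (Fin n) (Fin k) ℝ := Matrix.of fun i j => v j i with hA
  set T : (Fin k → ℝ) →ₗ[ℝ] (Fin n → ℝ) := A.mulVecLin with hT
  have hTapp : ∀ c, T c = ∑ i, c i • v i := fun c => comb_eq_mulVec v c
  have hinj : Function.Injective T := by
    rw [← LinearMap.ker_eq_bot, LinearMap.ker_eq_bot']
    intro c hc
    exact funext (Fintype.linearIndependent_iff.1 hv c (by rw [← hTapp]; exact hc))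
  let e := LinearEquiv.ofInjective T hinj
  let ce := e.toContinuousLinearEquiv
  refine ⟨‖(ce.symm : LinearMap.range T →L[ℝ] (Fin k → ℝ))‖, ContinuousLinearMap.opNorm_nonneg _, fun c => ?_⟩
  have h1 : c = ce.symm (ce c) := (ce.symm_apply_apply c).symm
  have h2 : ‖ce c‖ = ‖T c‖ := by
    have : ((ce c : LinearMap.range T) : (Fin n → ℝ)) = T c := by
      show ((e c : LinearMap.range T) : (Fin n → ℝ)) = T c
      simp [e]
    rw [← this]
    rfl
  calc ‖c‖ = ‖ce.symm (ce c)‖ := by rw [← h1]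
  _ ≤ ‖(ce.symm : LinearMap.range T →L[ℝ] (Fin k → ℝ))‖ * ‖ce c‖ :=
      (ce.symm : LinearMap.range T →L[ℝ] (Fin k → ℝ)).le_opNorm _
  _ = _ := by rw [h2, hTapp]

lemma exists_shortest (v : Fin k → Fin n → ℝ) (hv : LinearIndependent ℝ v) (hk : 0 < k) :
    ∃ m₀ : Fin k → ℤ, m₀ ≠ 0 ∧ ∀ m : Fin k → ℤ, m ≠ 0 →
      qv (icomb v m₀) ≤ qv (icomb v m) := by
  obtain ⟨K, hK0, hK⟩ := exists_antilip v hv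
  have i0 : Fin k := ⟨0, hk⟩
  set m₁ : Fin k → ℤ := Pi.single i0 1 with hm₁
  have hm₁ne : m₁ ≠ 0 := by
    intro h
    have := congrFun h i0
    simp [hm₁] at this
  set D : ℝ := qv (icomb v m₁) with hD
  set S : Set (Fin k → ℤ) := {m | m ≠ 0 ∧ qv (icomb v m) ≤ D} with hS
  set Mb : ℤ := ⌈K * Real.sqrt D⌉ with hMb
  have hbound : ∀ m ∈ S, ∀ i, m i ∈ Set.Icc (-Mb) Mb := by
    intro m hm i
    set c : Fin k → ℝ := fun i => (m i : ℝ) with hc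
    have h1 : ‖c‖ ≤ K * ‖icomb v m‖ := hK c
    have h2 : ‖icomb v m‖ ≤ Real.sqrt D := by
      refine (norm_le_sqrt_qv _).trans (Real.sqrt_le_sqrt hm.2)
    have h3 : (|m i| : ℝ) ≤ K * Real.sqrt D := by
      calc (|m i| : ℝ) = ‖c i‖ := by simp [hc, Real.norm_eq_abs]
      _ ≤ ‖c‖ := norm_le_pi_norm c i
      _ ≤ K * ‖icomb v m‖ := h1
      _ ≤ K * Real.sqrt D := mul_le_mul_of_nonneg_left h2 hK0
    have h4 : (|m i| : ℝ) ≤ (Mb : ℝ) := h3.trans (Int.le_ceil _)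
    have h5 : |m i| ≤ Mb := by exact_mod_cast h4
    exact ⟨neg_le_of_abs_le h5, le_of_abs_le h5⟩
  have hSfin : S.Finite := by
    refine Set.Finite.subset (Set.Finite.pi (fun i : Fin k => Set.finite_Icc (-Mb) Mb)) ?_
    intro m hm
    simp only [Set.mem_pi, Set.mem_univ, forall_true_left]
    intro i; exact hbound m hm i
  have hm₁S : m₁ ∈ S := ⟨hm₁ne, le_refl _⟩
  obtain ⟨m₀, hm₀mem, hmin⟩ := Finset.exists_min_image hSfin.toFinset
    (fun m => qv (icomb v m)) ⟨m₁, hSfin.mem_toFinset.2 hm₁S⟩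
  rw [hSfin.mem_toFinset] at hm₀mem
  refine ⟨m₀, hm₀mem.1, fun m hm => ?_⟩
  by_cases hmD : qv (icomb v m) ≤ D
  · exact hmin m (hSfin.mem_toFinset.2 ⟨hm, hmD⟩)
  · exact le_trans (le_trans hm₀mem.2 (le_of_not_ge hmD)) (le_refl _)

lemma exists_basis_smul {K : ℕ} (hK : 0 < K) (m₀ : Fin K → ℤ) (hm₀ : m₀ ≠ 0) :
    ∃ (b : Module.Basis (Fin K) ℤ (Fin K → ℤ)) (a : ℤ), a ≠ 0 ∧ m₀ = a • b ⟨0, hK⟩ := by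
  obtain ⟨nn, bM, bN, f, a, hsnf⟩ :=
    (Submodule.span ℤ {m₀}).smithNormalForm (Pi.basisFun ℤ (Fin K))
  have hmem : m₀ ∈ Submodule.span ℤ {m₀} := Submodule.mem_span_singleton_self m₀
  set mN : Submodule.span ℤ {m₀} := ⟨m₀, hmem⟩ with hmN
  choose cc hcc using fun i => Submodule.mem_span_singleton.1 (bN i).2
  set e : Fin nn → ℤ := fun i => bN.repr mN i with he
  have hrepr : (∑ i, e i * cc i) • m₀ = m₀ := by
    have h1 := bN.sum_repr mN
    have h3 : (∑ i, e i • (bN i : Fin K → ℤ)) = m₀ := by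
      have h2 := congrArg (Subtype.val) h1
      simp only [Submodule.coe_sum, SetLike.val_smul] at h2
      exact h2
    calc (∑ i, e i * cc i) • m₀ = ∑ i, (e i * cc i) • m₀ := Finset.sum_smul
      _ = ∑ i, e i • (bN i : Fin K → ℤ) :=
          Finset.sum_congr rfl fun i _ => by rw [← hcc i, smul_smul]
      _ = m₀ := h3
  have hone : (∑ i, e i * cc i) = 1 := by
    by_contra hne
    have : ((∑ i, e i * cc i) - 1) • m₀ = 0 := by
      rw [sub_smul, one_smul, hrepr, sub_self]
    rcases smul_eq_zero.1 this with h | h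
    · exact hne (by linarith [sub_eq_zero.1 h]  )
    · exact hm₀ h
  have hex : ∃ i₀, cc i₀ ≠ 0 := by
    by_contra hno
    push_neg at hno
    rw [Finset.sum_eq_zero (fun i _ => by rw [hno i, mul_zero])] at hone
    exact one_ne_zero hone.symm
  obtain ⟨i₀, hi₀⟩ := hex
  by_cases hj : ∃ j, j ≠ i₀
  · exfalso
    obtain ⟨j, hjne⟩ := hj
    have h4 : (cc j) • bN i₀ = (cc i₀) • bN j := by
      have : (((cc j • bN i₀ - cc i₀ • bN j : Submodule.span ℤ {m₀})) : Fin K → ℤ) = 0 := by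
        simp only [AddSubgroupClass.coe_sub, SetLike.val_smul]
        rw [← hcc i₀, ← hcc j, smul_smul, smul_smul, mul_comm, sub_self]
      exact sub_eq_zero.1 (Subtype.ext this)
    have h5 := congrArg (fun y => (bN.repr y) j) h4
    simp only [_root_.map_smul, Module.Basis.repr_self, Finsupp.smul_apply, Finsupp.single_apply,
      smul_eq_mul] at h5
    rw [if_neg (fun h : i₀ = j => hjne h.symm), mul_zero, if_pos trivial, mul_one] at h5
    exact hi₀ h5.symm
  · push_neg at hj
    have hsum : (∑ i, e i * cc i) = e i₀ * cc i₀ := by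
      refine Finset.sum_eq_single i₀ (fun b _ hb => absurd (hj b) hb) ?_
      intro h; exact absurd (Finset.mem_univ i₀) h
    have hunit : IsUnit (cc i₀) := IsUnit.of_mul_eq_one (e i₀) (by rw [mul_comm, ← hsum, hone])
    have ha0 : a i₀ ≠ 0 := by
      intro h
      have h1 : (bN i₀ : Fin K → ℤ) = 0 := by rw [hsnf i₀, h, zero_smul]
      exact bN.ne_zero i₀ (Subtype.ext h1)
    have hcc2 : cc i₀ * cc i₀ = 1 := by
      rcases Int.isUnit_iff.1 hunit with h | h <;> rw [h] <;> norm_num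
    have hm₀eq : m₀ = (cc i₀ * a i₀) • bM (f i₀) := by
      have h1 : cc i₀ • (cc i₀ • m₀) = m₀ := by rw [smul_smul, hcc2, one_smul]
      rw [← h1, hcc i₀, hsnf i₀, smul_smul]
    refine ⟨bM.reindex (Equiv.swap (f i₀) ⟨0, hK⟩), cc i₀ * a i₀,
      mul_ne_zero (IsUnit.ne_zero hunit) ha0, ?_⟩
    rw [Module.Basis.reindex_apply, Equiv.symm_swap, Equiv.swap_apply_right]
    exact hm₀eq

lemma icomb_smul (v : Fin k → Fin n → ℝ) (a : ℤ) (mm : Fin k → ℤ) :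
    icomb v (a • mm) = (a : ℝ) • icomb v mm := by
  unfold icomb
  rw [Finset.smul_sum]
  refine Finset.sum_congr rfl fun i _ => ?_
  rw [smul_smul]
  congr 1
  rw [Pi.smul_apply, smul_eq_mul, Int.cast_mul]

lemma icomb_single (v : Fin k → Fin n → ℝ) (i0 : Fin k) :
    icomb v (Pi.single i0 1) = v i0 := by
  unfold icomb
  rw [Finset.sum_eq_single_of_mem i0 (Finset.mem_univ _)]
  · simp
  · intro b _ hb
    simp [Pi.single_apply, hb]

lemma qv_smul (a : ℝ) (x : Fin n → ℝ) : qv (a • x) = a ^ 2 * qv x := by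
  simp [qv, Finset.mul_sum, mul_pow]

lemma comb_icomb {K : ℕ} (v : Fin k → Fin n → ℝ) (g : Fin K → ℝ) (mm : Fin K → Fin k → ℤ) :
    ∑ j, g j • icomb v (mm j) = ∑ i, (∑ j, g j * (mm j i : ℝ)) • v i := by
  unfold icomb
  have h1 : ∀ j, g j • ∑ i, (mm j i : ℝ) • v i = ∑ i, (g j * (mm j i : ℝ)) • v i := by
    intro j; rw [Finset.smul_sum]; exact Finset.sum_congr rfl fun i _ => (smul_smul _ _ _)
  rw [Finset.sum_congr rfl fun j _ => h1 j, Finset.sum_comm]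
  exact Finset.sum_congr rfl fun i _ => (Finset.sum_smul).symm

lemma gram_comb (v : Fin k → Fin n → ℝ) (E : Matrix (Fin k) (Fin k) ℝ) :
    gram (fun j => ∑ i, E i j • v i) = Eᵀ * gram v * E := by
  ext j j'
  simp only [gram, Matrix.of_apply, Matrix.mul_apply, Matrix.transpose_apply]
  have hL : ∀ i, dotv (E i j • v i) (∑ i', E i' j' • v i')
      = ∑ i', E i j * (E i' j' * dotv (v i) (v i')) := by
    intro i
    rw [dotv_smul_left, dotv_comm, dotv_sum_left, Finset.mul_sum]
    refine Finset.sum_congr rfl fun i' _ => ?_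
    rw [dotv_smul_left, dotv_comm (v i') (v i)]
  rw [dotv_sum_left, Finset.sum_congr rfl fun i _ => hL i, Finset.sum_comm]
  refine Finset.sum_congr rfl fun i' _ => ?_
  rw [Finset.sum_mul]
  refine Finset.sum_congr rfl fun i _ => ?_
  ring

set_option maxHeartbeats 1000000 in
lemma hermite {n : ℕ} : ∀ (k : ℕ) (v : Fin k → Fin n → ℝ), LinearIndependent ℝ v →
    0 ≤ (gram v).det ∧
    ∃ w : Fin k → Fin n → ℝ,
      (∀ j, ∃ m : Fin k → ℤ, w j = icomb v m) ∧
      LinearIndependent ℝ w ∧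
      ∏ j, qv (w j) ≤ 2 ^ (k * k) * (gram v).det := by
  intro k
  induction k with
  | zero =>
    intro v hv
    constructor
    · simp [gram, Matrix.det_isEmpty]
    · refine ⟨v, fun j => j.elim0, hv, ?_⟩
      simp [gram, Matrix.det_isEmpty]
  | succ k ih =>
    intro v hv
    have hcombzero : ∀ m : Fin (k+1) → ℤ, icomb v m = 0 → m = 0 := by
      intro m hm
      funext i
      have := Fintype.linearIndependent_iff.1 hv (fun i => (m i : ℝ)) hm i
      exact_mod_cast this
    obtain ⟨m₀, hm₀ne, hmin⟩ := exists_shortest v hv (Nat.succ_pos k)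
    set w₁ : Fin n → ℝ := icomb v m₀ with hw₁def
    have hw₁ne : w₁ ≠ 0 := fun h => hm₀ne (hcombzero m₀ h)
    have hqw₁pos : 0 < qv w₁ := qv_pos hw₁ne
    obtain ⟨b0, a, ha0, hm₀eq⟩ := exists_basis_smul (Nat.succ_pos k) m₀ hm₀ne
    have hz0 : (⟨0, Nat.succ_pos k⟩ : Fin (k+1)) = 0 := rfl
    rw [hz0] at hm₀eq
    have hQpos : 0 < qv (icomb v (b0 0)) :=
      qv_pos (fun h => Module.Basis.ne_zero b0 0 (hcombzero _ h))
    have hb0z : qv w₁ = (a:ℝ)^2 * qv (icomb v (b0 0)) := by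
      rw [hw₁def, hm₀eq, icomb_smul, qv_smul]
    have hminb : qv w₁ ≤ qv (icomb v (b0 0)) := hmin (b0 0) (Module.Basis.ne_zero b0 0)
    have haunit : IsUnit a := by
      have ha2 : (a:ℝ)^2 ≤ 1 := by nlinarith
      have h1 : (1:ℤ) ≤ a^2 := by nlinarith [Int.one_le_abs ha0, sq_abs a, abs_nonneg a]
      have h2 : a^2 = 1 := by
        have h3 : ((a:ℝ))^2 = 1 := by
          have : ((a^2 : ℤ) : ℝ) ≥ 1 := by exact_mod_cast h1
          push_cast at this
          linarith
        exact_mod_cast h3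
      exact IsUnit.of_mul_eq_one a (by rw [← pow_two]; exact h2)
    set b : Module.Basis (Fin (k+1)) ℤ (Fin (k+1) → ℤ) :=
      b0.unitsSMul (fun i => if i = 0 then haunit.unit else 1) with hb
    have hbz : b 0 = m₀ := by
      rw [hb, Module.Basis.unitsSMul_apply, if_pos rfl, Units.smul_def, haunit.unit_spec, ← hm₀eq]
    set v' : Fin (k+1) → Fin n → ℝ := fun j => icomb v (b j) with hv'def
    have hv'z : v' 0 = w₁ := by rw [hv'def]; simp only; rw [hbz, hw₁def]
    -- matrix of the basis b
    set Pint : Matrix (Fin (k+1)) (Fin (k+1)) ℤ := Matrix.of (fun i j => b j i) with hPint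
    have hPtm : Pint = (Pi.basisFun ℤ (Fin (k+1))).toMatrix ⇑b := by
      ext i j
      rw [hPint, Matrix.of_apply, Module.Basis.toMatrix_apply, Pi.basisFun_repr]
    haveI : Invertible ((Pi.basisFun ℤ (Fin (k+1))).toMatrix ⇑b) :=
      Module.Basis.invertibleToMatrix (Pi.basisFun ℤ (Fin (k+1))) b
    have hPunit : IsUnit Pint.det := by
      rw [hPtm]; exact Matrix.isUnit_det_of_invertible _
    set Pc : Matrix (Fin (k+1)) (Fin (k+1)) ℝ := Pint.map (Int.cast) with hPc
    have hPcdet : Pc.det = (Pint.det : ℝ) := by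
      rw [hPc]
      have h := RingHom.map_det (Int.castRingHom ℝ) Pint
      rw [RingHom.mapMatrix_apply] at h
      simp only [Int.coe_castRingHom] at h
      exact h.symm
    have hPcdet2 : Pc.det ^ 2 = 1 := by
      rcases Int.isUnit_iff.1 hPunit with h | h <;> rw [hPcdet, h] <;> norm_num
    have hPcne : Pc.det ≠ 0 := by
      intro h; rw [h] at hPcdet2; norm_num at hPcdet2
    have hv'comb : ∀ j, v' j = ∑ i, Pc i j • v i := by
      intro j
      rw [hv'def]
      simp only
      unfold icomb
      refine Finset.sum_congr rfl fun i _ => ?_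
      rw [hPc, Matrix.map_apply, hPint, Matrix.of_apply]
    have hgram1 : (gram v').det = (gram v).det := by
      have h1 : gram v' = Pcᵀ * gram v * Pc := by
        have h2 : v' = fun j => ∑ i, Pc i j • v i := funext hv'comb
        rw [h2]; exact gram_comb v Pc
      rw [h1, Matrix.det_mul, Matrix.det_mul, Matrix.det_transpose]
      have h3 : Pc.det * (gram v).det * Pc.det = (gram v).det * Pc.det^2 := by ring
      rw [h3, hPcdet2, mul_one]
    have hv' : LinearIndependent ℝ v' := by
      rw [Fintype.linearIndependent_iff]
      intro g hg j
      have h1 : ∑ j, g j • v' j = ∑ i, (∑ j, g j * ((b j) i : ℝ)) • v i :=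
        comb_icomb v g (fun j => b j)
      rw [h1] at hg
      have h2 : ∀ i, (∑ j, g j * ((b j) i : ℝ)) = 0 :=
        Fintype.linearIndependent_iff.1 hv _ hg
      have h3 : Pc.mulVec g = 0 := by
        funext i
        show ∑ j, Pc i j * g j = 0
        rw [← h2 i]
        refine Finset.sum_congr rfl fun j _ => ?_
        rw [hPc, Matrix.map_apply, hPint, Matrix.of_apply, mul_comm]
      haveI := Matrix.invertibleOfIsUnitDet Pc (isUnit_iff_ne_zero.2 hPcne)
      have h4 : g = 0 := by
        have h5 := congrArg (fun x => (⅟Pc).mulVec x) h3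
        simpa [Matrix.mulVec_mulVec, Matrix.one_mulVec] using h5
      exact congrFun h4 j
    -- projection
    set c : Fin k → ℝ := fun j => dotv (v' j.succ) w₁ / qv w₁ with hcdef0
    have hcdef : ∀ j, c j = dotv (v' j.succ) w₁ / qv w₁ := fun j => rfl
    set p : Fin k → Fin n → ℝ := fun j => v' j.succ - c j • w₁ with hpdef0
    have hpdef : ∀ j, p j = v' j.succ - c j • w₁ := fun j => rfl
    have hport : ∀ j, dotv (p j) w₁ = 0 := by
      intro j
      rw [hpdef j, dotv_sub_left, dotv_smul_left, dotv_self, hcdef j]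
      field_simp
      ring
    have hpind : LinearIndependent ℝ p := by
      rw [Fintype.linearIndependent_iff]
      intro g hg j
      set G : Fin (k+1) → ℝ := Fin.cases (-(∑ jj, g jj * c jj)) g with hG
      have hps : ∑ jj, g jj • p jj
          = (∑ jj, g jj • v' jj.succ) - (∑ jj, g jj * c jj) • w₁ := by
        calc ∑ jj, g jj • p jj
            = ∑ jj, (g jj • v' jj.succ - (g jj * c jj) • w₁) := by
              refine Finset.sum_congr rfl fun jj _ => ?_
              rw [hpdef jj, smul_sub, smul_smul]
          _ = _ := by rw [Finset.sum_sub_distrib, ← Finset.sum_smul]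
      have hsum : ∑ i, G i • v' i = ∑ jj, g jj • p jj := by
        rw [Fin.sum_univ_succ, hps]
        simp only [hG, Fin.cases_zero, Fin.cases_succ]
        rw [hv'z, neg_smul]
        abel
      have h0 : ∑ i, G i • v' i = 0 := by rw [hsum, hg]
      have hG0all := Fintype.linearIndependent_iff.1 hv' G h0
      have h1 := hG0all j.succ
      simpa [hG, Fin.cases_succ] using h1
    obtain ⟨hdetp, wb, hwbmem, hwbind, hwbprod⟩ := ih p hpind
    -- unimodular triangular change from v' to (w₁, p)
    set γ : Fin (k+1) → ℝ := Fin.cases 0 (fun jj => -(c jj)) with hγ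
    set E' : Matrix (Fin (k+1)) (Fin (k+1)) ℝ :=
      Matrix.of (fun i j => if i = j then (1:ℝ) else if i = 0 then γ j else 0) with hE'
    have hE'col : ∀ j, (Fin.cons w₁ p : Fin (k+1) → Fin n → ℝ) j = ∑ i, E' i j • v' i := by
      intro j
      cases j using Fin.cases with
      | zero =>
        rw [Fin.cons_zero, Fin.sum_univ_succ]
        have h1 : E' 0 0 = 1 := by rw [hE']; simp
        have h2 : ∀ ii : Fin k, E' ii.succ 0 = 0 := by
          intro ii; rw [hE']
          simp [Fin.succ_ne_zero]
        rw [h1, Finset.sum_eq_zero (fun ii _ => by rw [h2 ii, zero_smul]), hv'z]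
        simp
      | succ jj =>
        rw [Fin.cons_succ, Fin.sum_univ_succ]
        have h1 : E' 0 jj.succ = -(c jj) := by
          rw [hE', Matrix.of_apply, if_neg (Fin.succ_ne_zero jj).symm, if_pos rfl]
          simp [hγ]
        have h2 : ∀ ii : Fin k, E' ii.succ jj.succ = if ii = jj then 1 else 0 := by
          intro ii; rw [hE', Matrix.of_apply]
          by_cases h : ii = jj
          · rw [if_pos (by rw [h]), if_pos h]
          · rw [if_neg (by simpa [Fin.succ_inj] using h), if_neg (Fin.succ_ne_zero ii), if_neg h]
        rw [h1, hv'z]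
        rw [Finset.sum_congr rfl (fun ii _ => by rw [h2 ii])]
        have h3 : ∑ ii : Fin k, (if ii = jj then (1:ℝ) else 0) • v' ii.succ = v' jj.succ := by
          rw [Finset.sum_congr rfl (fun ii _ => by rw [ite_smul, one_smul, zero_smul])]
          rw [Finset.sum_ite_eq' Finset.univ jj (fun ii => v' ii.succ), if_pos (Finset.mem_univ _)]
        rw [h3, hpdef jj, neg_smul]
        abel
    have hE'det : E'.det = 1 := by
      have htri : E'.BlockTriangular id := by
        intro i j hij
        rw [hE', Matrix.of_apply]
        have hij' : (j : Fin (k+1)) < i := hij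
        rw [if_neg (by intro h; rw [h] at hij'; exact lt_irrefl _ hij')]
        rw [if_neg (by intro h; rw [h] at hij'; exact Fin.not_lt_zero j hij')]
      rw [Matrix.det_of_upperTriangular htri]
      exact Finset.prod_eq_one fun i _ => by rw [hE', Matrix.of_apply, if_pos rfl]
    have hgramudet : (gram (Fin.cons w₁ p)).det = (gram v').det := by
      have h1 : gram (Fin.cons w₁ p) = E'ᵀ * gram v' * E' := by
        have h2 : (Fin.cons w₁ p : Fin (k+1) → Fin n → ℝ) = fun j => ∑ i, E' i j • v' i :=
          funext hE'col
        rw [h2]; exact gram_comb v' E'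
      rw [h1, Matrix.det_mul, Matrix.det_mul, Matrix.det_transpose, hE'det]
      ring
    have hlap : (gram (Fin.cons w₁ p)).det = qv w₁ * (gram p).det := by
      rw [Matrix.det_succ_row_zero]
      rw [Finset.sum_eq_single_of_mem 0 (Finset.mem_univ _) ?side]
      · have h00 : gram (Fin.cons w₁ p) 0 0 = qv w₁ := by
          simp [gram, Fin.cons_zero, dotv_self]
        have hsub : (gram (Fin.cons w₁ p)).submatrix Fin.succ ((0 : Fin (k+1)).succAbove)
            = gram p := by
          rw [Fin.succAbove_zero]
          ext i j
          simp [Matrix.submatrix_apply, gram, Fin.cons_succ]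
        rw [h00, hsub]
        simp
      case side =>
        intro bb _ hbb
        obtain ⟨jj, rfl⟩ := Fin.eq_succ_of_ne_zero hbb
        have h1 : gram (Fin.cons w₁ p) 0 jj.succ = 0 := by
          simp only [gram, Matrix.of_apply, Fin.cons_zero, Fin.cons_succ]
          rw [dotv_comm]; exact hport jj
        rw [h1]
        ring
    have hdetv : (gram v).det = qv w₁ * (gram p).det := by
      rw [← hgram1, ← hgramudet, hlap]
    have hdetv_nonneg : 0 ≤ (gram v).det := by
      rw [hdetv]; exact mul_nonneg hqw₁pos.le hdetp
    -- lifting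
    choose mm hmm using hwbmem
    set t : Fin k → ℝ := fun j => ∑ i, (mm j i : ℝ) * c i with ht0
    have htdef : ∀ j, t j = ∑ i, (mm j i : ℝ) * c i := fun j => rfl
    set δ : Fin k → ℝ := fun j => t j - (round (t j) : ℝ) with hδ0
    have hδdef : ∀ j, δ j = t j - (round (t j) : ℝ) := fun j => rfl
    have hicombp : ∀ m : Fin k → ℤ,
        icomb p m = (∑ i, (m i : ℝ) • v' i.succ) - (∑ i, (m i : ℝ) * c i) • w₁ := by
      intro m
      unfold icomb
      calc ∑ i, (m i:ℝ) • p i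
          = ∑ i, ((m i:ℝ) • v' i.succ - ((m i:ℝ) * c i) • w₁) := by
            refine Finset.sum_congr rfl fun i _ => ?_
            rw [hpdef i, smul_sub, smul_smul]
        _ = _ := by rw [Finset.sum_sub_distrib, ← Finset.sum_smul]
    have hwbort : ∀ j, dotv (wb j) w₁ = 0 := by
      intro j; rw [hmm j]
      unfold icomb
      rw [dotv_sum_left]
      exact Finset.sum_eq_zero fun i _ => by rw [dotv_smul_left, hport i, mul_zero]
    set W : Fin (k+1) → Fin n → ℝ := Fin.cons w₁ (fun j => wb j + δ j • w₁) with hW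
    have hWz : W 0 = w₁ := by rw [hW]; exact Fin.cons_zero _ _
    have hWsucc : ∀ j, W j.succ = wb j + δ j • w₁ := fun j => by
      rw [hW]; exact Fin.cons_succ _ _ _
    have hWsucc_eq : ∀ j, wb j + δ j • w₁
        = (∑ i, (mm j i:ℝ) • v' i.succ) - ((round (t j) : ℝ)) • w₁ := by
      intro j
      rw [hmm j, hicombp, ← htdef j, hδdef j, sub_smul]
      abel
    have hWmem' : ∀ j, ∃ m : Fin (k+1) → ℤ, W j = icomb v' m := by
      intro j
      cases j using Fin.cases with
      | zero =>
        refine ⟨Pi.single 0 1, ?_⟩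
        rw [icomb_single, hWz, hv'z]
      | succ jj =>
        refine ⟨Fin.cases (-(round (t jj))) (mm jj), ?_⟩
        rw [hWsucc jj, hWsucc_eq jj]
        unfold icomb
        rw [Fin.sum_univ_succ]
        simp only [Fin.cases_zero, Fin.cases_succ]
        rw [hv'z]
        push_cast
        rw [neg_smul]
        abel
    have hWmem : ∀ j, ∃ m : Fin (k+1) → ℤ, W j = icomb v m := by
      intro j
      obtain ⟨m, hm⟩ := hWmem' j
      refine ⟨∑ jj, m jj • b jj, ?_⟩
      rw [hm, ← icomb_sum]
      rfl
    have hWq : ∀ j, qv (wb j + δ j • w₁) = qv (wb j) + (δ j)^2 * qv w₁ :=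
      fun j => pythagoras (δ j) (hwbort j)
    have hδsq : ∀ j, (δ j)^2 ≤ 1/4 := by
      intro j
      have h1 : |δ j| ≤ 1/2 := by rw [hδdef j]; exact abs_sub_round (t j)
      nlinarith [(abs_le.1 h1).1, (abs_le.1 h1).2]
    have hWne : ∀ j, wb j + δ j • w₁ ≠ 0 := by
      intro j h
      have h1 : qv (wb j) + (δ j)^2 * qv w₁ = 0 := by
        rw [← hWq j, h]; simp [qv]
      have h2 : qv (wb j) = 0 := by
        nlinarith [qv_nonneg (wb j), sq_nonneg (δ j), hqw₁pos.le]
      exact hwbind.ne_zero j (qv_eq_zero h2)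
    have hWmin : ∀ j, qv w₁ ≤ qv (wb j + δ j • w₁) := by
      intro j
      obtain ⟨m, hm⟩ := hWmem j.succ
      rw [hWsucc j] at hm
      have hmne : m ≠ 0 := by
        intro h0
        apply hWne j
        rw [hm, h0]
        simp [icomb]
      rw [hm]; exact hmin m hmne
    have hwb34 : ∀ j, (3/4) * qv w₁ ≤ qv (wb j) := by
      intro j
      have h1 := hWmin j
      rw [hWq j] at h1
      have h2 : (δ j)^2 * qv w₁ ≤ (1/4) * qv w₁ :=
        mul_le_mul_of_nonneg_right (hδsq j) hqw₁pos.le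
      have h4 : qv (wb j) + δ j ^ 2 * qv w₁ ≤ qv (wb j) + 1/4 * qv w₁ := add_le_add_right h2 _
      have h5 : qv w₁ ≤ qv (wb j) + 1/4 * qv w₁ := le_trans h1 h4
      linarith
    have hW43 : ∀ j, qv (wb j + δ j • w₁) ≤ (4/3) * qv (wb j) := by
      intro j
      rw [hWq j]
      have h2 : (δ j)^2 * qv w₁ ≤ (1/4) * qv w₁ :=
        mul_le_mul_of_nonneg_right (hδsq j) hqw₁pos.le
      linarith [hwb34 j]
    have hprod : ∏ j, qv (W j) ≤ 2 ^ ((k+1)*(k+1)) * (gram v).det := by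
      rw [Fin.prod_univ_succ, hWz]
      have h1 : ∏ j : Fin k, qv (W j.succ) ≤ ∏ j : Fin k, ((4/3 : ℝ) * qv (wb j)) := by
        refine Finset.prod_le_prod (fun j _ => qv_nonneg _) (fun j _ => ?_)
        rw [hWsucc j]
        exact hW43 j
      have h2 : ∏ j : Fin k, ((4/3 : ℝ) * qv (wb j)) = (4/3:ℝ)^k * ∏ j, qv (wb j) := by
        rw [Finset.prod_mul_distrib, Finset.prod_const, Finset.card_univ, Fintype.card_fin]
      calc qv w₁ * ∏ j : Fin k, qv (W j.succ)
          ≤ qv w₁ * ((4/3:ℝ)^k * ∏ j, qv (wb j)) := by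
            refine mul_le_mul_of_nonneg_left ?_ hqw₁pos.le
            rw [← h2]; exact h1
        _ ≤ qv w₁ * ((4/3:ℝ)^k * (2^(k*k) * (gram p).det)) := by
            refine mul_le_mul_of_nonneg_left
              (mul_le_mul_of_nonneg_left hwbprod (by positivity)) hqw₁pos.le
        _ = (4/3:ℝ)^k * 2^(k*k) * (gram v).det := by rw [hdetv]; ring
        _ ≤ 2^((k+1)*(k+1)) * (gram v).det := by
            refine mul_le_mul_of_nonneg_right ?_ hdetv_nonneg
            have h3 : ((4:ℝ)/3)^k ≤ 2^k := pow_le_pow_left₀ (by norm_num) (by norm_num) k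
            calc ((4:ℝ)/3)^k * 2^(k*k) ≤ 2^k * 2^(k*k) :=
                  mul_le_mul_of_nonneg_right h3 (by positivity)
              _ = 2^(k + k*k) := by rw [← pow_add]
              _ ≤ 2^((k+1)*(k+1)) := by
                  refine pow_le_pow_right₀ (by norm_num) (by nlinarith)
    have hdotlift : ∀ g : Fin k → ℝ,
        ∑ j, g j • (wb j + δ j • w₁) = (∑ j, g j • wb j) + (∑ j, g j * δ j) • w₁ := by
      intro g
      calc ∑ j, g j • (wb j + δ j • w₁)
          = ∑ j, (g j • wb j + (g j * δ j) • w₁) := by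
            refine Finset.sum_congr rfl fun j _ => ?_
            rw [smul_add, smul_smul]
        _ = _ := by rw [Finset.sum_add_distrib, ← Finset.sum_smul]
    have hdotw : ∀ g : Fin k → ℝ, dotv (∑ j, g j • wb j) w₁ = 0 := by
      intro g
      rw [dotv_sum_left]
      exact Finset.sum_eq_zero fun j _ => by rw [dotv_smul_left, hwbort j, mul_zero]
    have hWind : LinearIndependent ℝ W := by
      rw [hW, linearIndependent_fin_cons]
      constructor
      · rw [Fintype.linearIndependent_iff]
        intro g hg j
        rw [hdotlift g] at hg
        have h1 : dotv ((∑ j, g j • wb j) + (∑ j, g j * δ j) • w₁) w₁ = 0 := by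
          rw [hg]; simp [dotv]
        rw [dotv_add_left, dotv_smul_left, dotv_self, hdotw g, zero_add] at h1
        have h2 : (∑ j, g j * δ j) = 0 := by
          rcases mul_eq_zero.1 h1 with h | h
          · exact h
          · exact absurd h hqw₁pos.ne'
        rw [h2, zero_smul, add_zero] at hg
        exact Fintype.linearIndependent_iff.1 hwbind g hg j
      · intro hmem
        rw [Submodule.mem_span_range_iff_exists_fun] at hmem
        obtain ⟨g, hg⟩ := hmem
        rw [hdotlift g] at hg
        have h1' : ∑ j, g j • wb j = w₁ - (∑ j, g j * δ j) • w₁ := eq_sub_of_add_eq hg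
        have h1 : (1 - ∑ j, g j * δ j) • w₁ = ∑ j, g j • wb j := by
          rw [h1', sub_smul, one_smul]
        have h2 : (1 - ∑ j, g j * δ j) * qv w₁ = 0 := by
          have h3 := congrArg (fun y => dotv y w₁) h1
          rw [dotv_smul_left, dotv_self, hdotw g] at h3
          exact h3
        have h3 : (∑ j, g j * δ j) = 1 := by
          rcases mul_eq_zero.1 h2 with h | h
          · linarith [sub_eq_zero.1 h]
          · exact absurd h hqw₁pos.ne'
        have h4 : ∑ j, g j • wb j = 0 := by
          rw [← h1, h3]; simp
        have h5 := Fintype.linearIndependent_iff.1 hwbind g h4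
        rw [Finset.sum_eq_zero (fun j _ => by rw [h5 j, zero_mul])] at h3
        norm_num at h3
    exact ⟨hdetv_nonneg, W, hWmem, hWind, hprod⟩

lemma det_abs_le (N : ℕ) (A : Matrix (Fin N) (Fin N) ℝ) (g : Fin N → ℝ)
    (hg : ∀ i j, |A i j| ≤ g j) :
    |A.det| ≤ (N.factorial : ℝ) * ∏ j, g j := by
  rw [Matrix.det_apply]
  calc |∑ σ : Equiv.Perm (Fin N), Equiv.Perm.sign σ • ∏ i, A (σ i) i|
      ≤ ∑ σ : Equiv.Perm (Fin N), |Equiv.Perm.sign σ • ∏ i, A (σ i) i| :=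
        Finset.abs_sum_le_sum_abs _ _
    _ ≤ ∑ _σ : Equiv.Perm (Fin N), ∏ j, g j := by
        refine Finset.sum_le_sum fun σ _ => ?_
        have h1 : |Equiv.Perm.sign σ • ∏ i, A (σ i) i| = |∏ i, A (σ i) i| := by
          rcases Int.units_eq_one_or (Equiv.Perm.sign σ) with h | h <;>
            rw [h] <;> simp [Units.smul_def]
        rw [h1, Finset.abs_prod]
        exact Finset.prod_le_prod (fun i _ => abs_nonneg _) (fun i _ => hg _ i)
    _ = (N.factorial : ℝ) * ∏ j, g j := by
        rw [Finset.sum_const, Finset.card_univ, Fintype.card_perm, Fintype.card_fin,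
          nsmul_eq_mul]


end

end Stmt19Aux

open scoped Classical

/-- The lattice `B ℤ^n ⊆ ℝ^n` spanned by the columns of the matrix `B`
(with the sup norm on `ℝ^n`). -/
def latticeOf {n : ℕ} (B : Matrix (Fin n) (Fin n) ℝ) : Set (Fin n → ℝ) :=
  {v | ∃ m : Fin n → ℤ, v = B.mulVec fun i => (m i : ℝ)}

/-- The Dirichlet fundamental domain of a lattice `Λ ⊆ ℝ^n` centered at `0`:
points at least as close (in sup norm) to `0` as to any other lattice point. -/
def dirichletDomain {n : ℕ} (Λ : Set (Fin n → ℝ)) : Set (Fin n → ℝ) :=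
  {r | ∀ v ∈ Λ, ‖r‖ ≤ ‖r - v‖}

/-- The dual lattice of a lattice `Λ ⊆ ℝ^n`. -/
def dualLattice {n : ℕ} (Λ : Set (Fin n → ℝ)) : Set (Fin n → ℝ) :=
  {s | ∀ r ∈ Λ, ∃ z : ℤ, ∑ i, r i * s i = (z : ℝ)}

open Stmt19Aux Matrix in
set_option maxHeartbeats 1600000 in
set_option synthInstance.maxHeartbeats 400000 in
theorem stmt_19 (n : ℕ) :
    ∃ C : ℝ, 0 < C ∧
      ∀ (B : Matrix (Fin n) (Fin n) ℝ), |B.det| = 1 →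
        ∀ R : ℝ, 0 < R →
          ¬ dirichletDomain (latticeOf B) ⊆ Metric.ball (0 : Fin n → ℝ) R →
            ∃ s : Fin n → ℝ, s ∈ dualLattice (latticeOf B) ∧ s ≠ 0 ∧ ‖s‖ ≤ C / R := by
  refine ⟨(n.factorial : ℝ) * 2^(n*n) * n + 1, by positivity, ?_⟩
  set C : ℝ := (n.factorial : ℝ) * 2^(n*n) * n + 1 with hC
  intro B hdet R hR hns
  rw [Set.not_subset] at hns
  obtain ⟨r, hrD, hrball⟩ := hns
  have hrnorm : R ≤ ‖r‖ := by
    by_contra h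
    exact hrball (by rw [Metric.mem_ball, dist_zero_right]; linarith)
  rcases Nat.eq_zero_or_pos n with hn0 | hnpos
  · exfalso
    subst hn0
    have h0 : r = 0 := funext fun i => i.elim0
    rw [h0, norm_zero] at hrnorm
    linarith
  -- columns of B as a family
  set v : Fin n → Fin n → ℝ := fun j i => B i j with hv
  have hBdet_ne : B.det ≠ 0 := by
    intro h; rw [h] at hdet; norm_num at hdet
  have hBic : ∀ m : Fin n → ℤ, B.mulVec (fun i => (m i : ℝ)) = icomb v m :=
    fun m => comb_eq_mulVec v (fun i => (m i : ℝ))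
  have hvind : LinearIndependent ℝ v := by
    rw [Fintype.linearIndependent_iff]
    intro g hg j
    have h1 : B.mulVec g = 0 := (comb_eq_mulVec v g).trans hg
    haveI := Matrix.invertibleOfIsUnitDet B (isUnit_iff_ne_zero.2 hBdet_ne)
    have h4 : g = 0 := by
      have h5 := congrArg (fun x => (⅟B).mulVec x) h1
      simpa [Matrix.mulVec_mulVec, Matrix.one_mulVec] using h5
    exact congrFun h4 j
  have hlat : ∀ x, x ∈ latticeOf B ↔ ∃ m : Fin n → ℤ, x = icomb v m := by
    intro x
    constructor
    · rintro ⟨m, rfl⟩; exact ⟨m, (hBic m)⟩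
    · rintro ⟨m, rfl⟩; exact ⟨m, (hBic m).symm⟩
  have hgramdet : (gram v).det = 1 := by
    have h1 : gram v = Bᵀ * B := by
      ext i j
      simp [Stmt19Aux.gram, dotv, Matrix.mul_apply, Matrix.transpose_apply, hv]
    rw [h1, Matrix.det_mul, Matrix.det_transpose]
    rcases (abs_eq (by norm_num : (0:ℝ) ≤ 1)).1 hdet with h | h <;> rw [h] <;> norm_num
  obtain ⟨hdet0, w, hwmem, hwind, hwprod⟩ := hermite n v hvind
  rw [hgramdet, mul_one] at hwprod
  choose mw hmw using hwmem
  haveI : Nonempty (Fin n) := ⟨⟨0, hnpos⟩⟩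
  have hcard : Fintype.card (Fin n) = Module.finrank ℝ (Fin n → ℝ) := by simp
  set bw : Module.Basis (Fin n) ℝ (Fin n → ℝ) := basisOfLinearIndependentOfCardEqFinrank hwind hcard
    with hbwdef
  have hbw : ∀ j, bw j = w j := fun j => by
    rw [hbwdef, coe_basisOfLinearIndependentOfCardEqFinrank]
  set cr : Fin n → ℝ := fun j => bw.repr r j with hcr
  have hrsum : r = ∑ j, cr j • w j := by
    conv_lhs => rw [← bw.sum_repr r]
    exact Finset.sum_congr rfl fun j _ => by rw [hbw j]
  set u : Fin n → ℝ := ∑ j, ((round (cr j) : ℝ)) • w j with hu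
  have humem : u ∈ latticeOf B := by
    rw [hlat]
    refine ⟨∑ j, round (cr j) • mw j, ?_⟩
    rw [← icomb_sum, hu]
    exact Finset.sum_congr rfl fun j _ => by rw [hmw j]
  have hru : ‖r‖ ≤ ‖r - u‖ := hrD u humem
  have hrmu : r - u = ∑ j, (cr j - (round (cr j):ℝ)) • w j := by
    rw [hu]
    conv_lhs => rw [hrsum]
    rw [← Finset.sum_sub_distrib]
    exact Finset.sum_congr rfl fun j _ => by rw [sub_smul]
  obtain ⟨i₀, _, hi₀max⟩ := Finset.exists_max_image Finset.univ (fun j => qv (w j))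
    ⟨⟨0, hnpos⟩, Finset.mem_univ _⟩
  have hqw_pos : ∀ j, 0 < qv (w j) := fun j => qv_pos (hwind.ne_zero j)
  have hbound1 : ‖r - u‖ ≤ (n:ℝ) * ((1/2) * Real.sqrt (qv (w i₀))) := by
    rw [hrmu]
    calc ‖∑ j, (cr j - (round (cr j):ℝ)) • w j‖
        ≤ ∑ j, ‖(cr j - (round (cr j):ℝ)) • w j‖ := norm_sum_le _ _
      _ ≤ ∑ _j : Fin n, (1/2) * Real.sqrt (qv (w i₀)) := by
          refine Finset.sum_le_sum fun j _ => ?_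
          rw [norm_smul, Real.norm_eq_abs]
          have h1 : |cr j - (round (cr j):ℝ)| ≤ 1/2 := abs_sub_round _
          have h2 : ‖w j‖ ≤ Real.sqrt (qv (w i₀)) :=
            (norm_le_sqrt_qv _).trans (Real.sqrt_le_sqrt (hi₀max j (Finset.mem_univ j)))
          exact mul_le_mul h1 h2 (norm_nonneg _) (by norm_num)
      _ = (n:ℝ) * ((1/2) * Real.sqrt (qv (w i₀))) := by
          rw [Finset.sum_const, Finset.card_univ, Fintype.card_fin, nsmul_eq_mul]
  have hq_lb : 4*R^2/(n:ℝ)^2 ≤ qv (w i₀) := by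
    have h1 : R ≤ (n:ℝ) * ((1/2) * Real.sqrt (qv (w i₀))) :=
      le_trans hrnorm (le_trans hru hbound1)
    have hn0' : (0:ℝ) < n := by exact_mod_cast hnpos
    have h2 : 2*R/(n:ℝ) ≤ Real.sqrt (qv (w i₀)) := by
      rw [div_le_iff₀ hn0']
      nlinarith
    have h3 : (2*R/(n:ℝ))^2 ≤ qv (w i₀) := by
      calc (2*R/(n:ℝ))^2 ≤ (Real.sqrt (qv (w i₀)))^2 := by
            nlinarith [Real.sqrt_nonneg (qv (w i₀)), hR.le, hn0'.le, div_nonneg (by linarith : (0:ℝ) ≤ 2*R) hn0'.le]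
        _ = qv (w i₀) := Real.sq_sqrt (qv_nonneg _)
    calc 4*R^2/(n:ℝ)^2 = (2*R/(n:ℝ))^2 := by field_simp; ring
      _ ≤ qv (w i₀) := h3
  have hprod_erase : ∏ j ∈ Finset.univ.erase i₀, qv (w j) ≤ 2^(n*n) * (n:ℝ)^2/(4*R^2) := by
    have h1 : qv (w i₀) * ∏ j ∈ Finset.univ.erase i₀, qv (w j) = ∏ j, qv (w j) :=
      Finset.mul_prod_erase Finset.univ (fun j => qv (w j)) (Finset.mem_univ i₀)
    have h2 : (0:ℝ) < qv (w i₀) := hqw_pos i₀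
    have h3 : ∏ j ∈ Finset.univ.erase i₀, qv (w j) ≤ 2^(n*n) / qv (w i₀) := by
      rw [le_div_iff₀ h2]
      calc (∏ j ∈ Finset.univ.erase i₀, qv (w j)) * qv (w i₀) = ∏ j, qv (w j) := by
            rw [mul_comm, h1]
        _ ≤ 2^(n*n) := hwprod
    refine h3.trans ?_
    rw [div_le_div_iff₀ h2 (by positivity)]
    have h6 : 4*R^2 ≤ qv (w i₀) * (n:ℝ)^2 := (div_le_iff₀ (by positivity)).1 hq_lb
    calc (2:ℝ)^(n*n) * (4*R^2) ≤ 2^(n*n) * (qv (w i₀) * (n:ℝ)^2) :=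
          mul_le_mul_of_nonneg_left h6 (by positivity)
      _ = 2^(n*n)*(n:ℝ)^2 * qv (w i₀) := by ring
  -- the dual vector via Cramer
  set V : Matrix (Fin n) (Fin n) ℝ := Matrix.of (fun i j => w j i) with hV
  set s : Fin n → ℝ := fun ℓ => (V.cramer (Pi.single ℓ 1 : Fin n → ℝ)) i₀ with hsdef
  have hsl : ∀ ℓ, s ℓ = (V.updateCol i₀ (Pi.single ℓ 1)).det :=
    fun ℓ => Matrix.cramer_apply V (Pi.single ℓ 1) i₀
  have hVdet : V.det ≠ 0 := by
    intro h0
    obtain ⟨g, hgne, hg0⟩ := Matrix.exists_mulVec_eq_zero_iff.2 h0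
    have h1 : ∑ j, g j • w j = 0 := by
      rw [← comb_eq_mulVec w g]
      exact hg0
    exact hgne (funext (Fintype.linearIndependent_iff.1 hwind g h1))
  have hlin : ∀ y : Fin n → ℝ, ∑ i, y i * s i = (V.updateCol i₀ y).det := by
    intro y
    have h1 : y = ∑ ℓ, y ℓ • (Pi.single ℓ 1 : Fin n → ℝ) := by
      conv_lhs => rw [pi_eq_sum_univ y]
      refine Finset.sum_congr rfl fun ℓ _ => ?_
      congr 1
      funext j
      simp [Pi.single_apply, eq_comm]
    have h2 : V.cramer y i₀ = ∑ ℓ, y ℓ * V.cramer (Pi.single ℓ 1) i₀ := by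
      conv_lhs => rw [h1]
      rw [map_sum, Finset.sum_apply]
      exact Finset.sum_congr rfl fun ℓ _ => by rw [_root_.map_smul]; rfl
    rw [← Matrix.cramer_apply, h2]
  have hsne : s ≠ 0 := by
    intro h0
    have h1 : ∑ i, V i i₀ * s i = V.det := by
      rw [hlin (fun i => V i i₀), Matrix.updateCol_eq_self]
    rw [h0] at h1
    simp at h1
    exact hVdet h1.symm
  have hsmem : s ∈ dualLattice (latticeOf B) := by
    intro x hx
    rw [hlat] at hx
    obtain ⟨mx, rfl⟩ := hx
    set Mint : Matrix (Fin n) (Fin n) ℤ :=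
      Matrix.of (fun l j => if j = i₀ then mx l else mw j l) with hMint
    have hupd : V.updateCol i₀ (icomb v mx) = B * (Mint.map (Int.cast : ℤ → ℝ)) := by
      ext i j
      rw [Matrix.updateCol_apply]
      have hcol : (B * (Mint.map (Int.cast : ℤ → ℝ))) i j
          = icomb v (fun l => Mint l j) i := by
        have h5 := congrFun (hBic (fun l => Mint l j)) i
        simpa [Matrix.mul_apply, Matrix.mulVec, dotProduct, Matrix.map_apply]
          using h5
      rw [hcol]
      by_cases h : j = i₀
      · rw [if_pos h]
        congr 1
        funext l
        rw [hMint]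
        simp [h]
      · rw [if_neg h]
        have h7 : (fun l => Mint l j) = mw j := by
          funext l; rw [hMint]; simp [h]
        rw [h7, ← hmw j]
        rw [hV]
        rfl
    have hdetB : B.det = 1 ∨ B.det = -1 := (abs_eq (by norm_num : (0:ℝ) ≤ 1)).1 hdet
    refine ⟨(if B.det = 1 then Mint.det else -Mint.det : ℤ), ?_⟩
    rw [hlin, hupd, Matrix.det_mul]
    have hMc : (Mint.map (Int.cast : ℤ → ℝ)).det = ((Mint.det : ℤ) : ℝ) := by
      have h := RingHom.map_det (Int.castRingHom ℝ) Mint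
      rw [RingHom.mapMatrix_apply] at h
      simp only [Int.coe_castRingHom] at h
      exact h.symm
    rw [hMc]
    rcases hdetB with h | h
    · rw [h, if_pos rfl]; push_cast; ring
    · rw [h, if_neg (by norm_num)]; push_cast; ring
  -- norm bound
  have hsbound : ∀ ℓ, |s ℓ| ≤ C / R := by
    intro ℓ
    set g : Fin n → ℝ := fun c => if c = i₀ then 1 else Real.sqrt (qv (w c)) with hg
    have hentry : ∀ i c, |(V.updateCol i₀ (Pi.single ℓ 1 : Fin n → ℝ)) i c| ≤ g c := by
      intro i c
      rw [Matrix.updateCol_apply]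
      show _ ≤ (if c = i₀ then (1:ℝ) else Real.sqrt (qv (w c)))
      by_cases h : c = i₀
      · rw [if_pos h, if_pos h]
        rcases eq_or_ne i ℓ with h2 | h2
        · subst h2; rw [Pi.single_eq_same]; norm_num
        · rw [Pi.single_eq_of_ne h2]; norm_num
      · rw [if_neg h, if_neg h]
        exact abs_le_sqrt_qv (w c) i
    have h1 : |s ℓ| ≤ (n.factorial : ℝ) * ∏ c, g c := by
      rw [hsl ℓ]
      exact det_abs_le n _ g hentry
    have h2 : ∏ c, g c = ∏ c ∈ Finset.univ.erase i₀, Real.sqrt (qv (w c)) := by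
      rw [← Finset.mul_prod_erase Finset.univ g (Finset.mem_univ i₀)]
      have hgi : g i₀ = 1 := by simp [hg]
      rw [hgi, one_mul]
      refine Finset.prod_congr rfl fun c hc => ?_
      have hcne : c ≠ i₀ := (Finset.mem_erase.1 hc).1
      simp [hg, hcne]
    set PS : ℝ := ∏ c ∈ Finset.univ.erase i₀, Real.sqrt (qv (w c)) with hPS
    have hPSnn : 0 ≤ PS := Finset.prod_nonneg fun c _ => Real.sqrt_nonneg _
    have hPSsq : PS^2 = ∏ c ∈ Finset.univ.erase i₀, qv (w c) := by
      rw [hPS, ← Finset.prod_pow]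
      exact Finset.prod_congr rfl fun c _ => Real.sq_sqrt (qv_nonneg _)
    have hPSb : PS ≤ 2^(n*n) * (n:ℝ) / (2*R) := by
      have h3 : PS^2 ≤ (2^(n*n) * (n:ℝ) / (2*R))^2 := by
        rw [hPSsq]
        refine hprod_erase.trans ?_
        have h4 : ((2:ℝ)^(n*n) * (n:ℝ) / (2*R))^2 = (2^(n*n))^2 * (n:ℝ)^2/(4*R^2) := by
          field_simp
          ring
        rw [h4]
        have hp1 : (1:ℝ) ≤ 2^(n*n) := one_le_pow₀ (by norm_num : (1:ℝ) ≤ 2)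
        have h5 : (2:ℝ)^(n*n) ≤ (2^(n*n))^2 := by nlinarith
        exact (div_le_div_iff_of_pos_right (by positivity : (0:ℝ) < 4*R^2)).2
          (mul_le_mul_of_nonneg_right h5 (by positivity))
      calc PS = Real.sqrt (PS^2) := (Real.sqrt_sq hPSnn).symm
        _ ≤ Real.sqrt ((2^(n*n) * (n:ℝ) / (2*R))^2) := Real.sqrt_le_sqrt h3
        _ = 2^(n*n) * (n:ℝ) / (2*R) := Real.sqrt_sq (by positivity)
    calc |s ℓ| ≤ (n.factorial : ℝ) * ∏ c, g c := h1
      _ = (n.factorial : ℝ) * PS := by rw [h2]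
      _ ≤ (n.factorial : ℝ) * (2^(n*n) * (n:ℝ) / (2*R)) := by
          exact mul_le_mul_of_nonneg_left hPSb (by positivity)
      _ = ((n.factorial:ℝ) * (2^(n*n) * n)) / (2*R) := by ring
      _ ≤ C / R := by
          rw [div_le_div_iff₀ (by positivity) hR, hC]
          have hpos : (0:ℝ) ≤ (n.factorial:ℝ) * (2^(n*n) * n) := by positivity
          nlinarith [hR, hpos]
  have hCpos : (0:ℝ) < C := by rw [hC]; positivity
  refine ⟨s, hsmem, hsne, ?_⟩
  rw [pi_norm_le_iff_of_nonneg (div_nonneg hCpos.le hR.le)]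
  intro i
  rw [Real.norm_eq_abs]
  exact hsbound i
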